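/- Let σ be a k-permutation. (1) If σ is fully k-rooted cuttable, then there exist no positions p_1 < ⋯ < p_k < q < r such that σ(r) ≤ σ(p_i) ≤ σ(q) for all i ∈ {1,…,k}. (2) If σ is not fully k-rooted cuttable, then there exist positions p_1 < ⋯ < p_k < q < r with σ(r) < σ(q) and σ(p_i) ≤ σ(q) for all i ∈ {1,…,k}, and there also exist positions p_1 < ⋯ < p_k < q < r with σ(r) < σ(q) and σ(r) ≤ σ(p_i) for all i ∈ {1,…,k}. -/

import Mathlib

/-- `σ` is a `k`-permutation of degree `n`: a word over the alphabet `{1, …, n}`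
in which every value `i ∈ {1, …, n}` occurs exactly `k` times (and no other
letter occurs). -/
def IsMultiPerm (k n : ℕ) (σ : List ℕ) : Prop :=
  ∀ i : ℕ, σ.count i = if 1 ≤ i ∧ i ≤ n then k else 0

/-- The restriction `σ^{|L}` of a multipermutation `σ` to a set `L` of values:
delete all letters whose value is not in `L`, and replace, for each `x`, the
`x`-th smallest element of `L` by `x`. -/
def restrict (σ : List ℕ) (L : Finset ℕ) : List ℕ :=
  (σ.filter fun x => decide (x ∈ L)).map fun x => (L.filter fun y => y ≤ x).card

/-- `γ` is a `k`-rooted cut of the `k`-permutation `σ` of degree `n`: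
`1 ≤ γ ≤ n - 1` and `σ = μ·ν·ω` where `μ` consists of the first `k` letters of
`σ` and `ν`, `ω` are words such that every letter of `ν` is at most `γ` and
every letter of `ω` is greater than `γ`. -/
def IsKRootedCut (k n : ℕ) (σ : List ℕ) (γ : ℕ) : Prop :=
  1 ≤ γ ∧ γ ≤ n - 1 ∧
    ∃ μ ν ω : List ℕ,
      σ = μ ++ ν ++ ω ∧ μ.length = k ∧ (∀ x ∈ ν, x ≤ γ) ∧ (∀ x ∈ ω, γ < x)

/-- A `k`-permutation of degree `n` is `k`-rooted cuttable if it has a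
`k`-rooted cut. -/
def KRootedCuttable (k n : ℕ) (σ : List ℕ) : Prop :=
  ∃ γ, IsKRootedCut k n σ γ

/-- A `k`-permutation of degree `n` is fully `k`-rooted cuttable if its
restriction to every interval `{a, …, b} ⊆ {1, …, n}` with `a < b` is
`k`-rooted cuttable. -/
def FullyKRootedCuttable (k n : ℕ) (σ : List ℕ) : Prop :=
  ∀ a b : ℕ, 1 ≤ a → a < b → b ≤ n →
    KRootedCuttable k (Finset.Icc a b).card (restrict σ (Finset.Icc a b))

/-- Let `σ` be a `k`-permutation.
(1) If `σ` is fully `k`-rooted cuttable, then there are no positions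
`p₁ < ⋯ < p_k < q < r` such that `σ(r) ≤ σ(pᵢ) ≤ σ(q)` for all `i`.
(2) If `σ` is not fully `k`-rooted cuttable, then there exist positions
`p₁ < ⋯ < p_k < q < r` with `σ(r) < σ(q)` and `σ(pᵢ) ≤ σ(q)` for all `i`,
and there also exist positions `p₁ < ⋯ < p_k < q < r` with `σ(r) < σ(q)` and
`σ(r) ≤ σ(pᵢ)` for all `i`. -/


lemma MP_rank_mono (L : Finset ℕ) {x y : ℕ} (h : x ≤ y) :
    (L.filter fun z => z ≤ x).card ≤ (L.filter fun z => z ≤ y).card := by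
  apply Finset.card_le_card
  intro z hz
  rw [Finset.mem_filter] at hz ⊢
  exact ⟨hz.1, le_trans hz.2 h⟩

lemma MP_rank_strict (L : Finset ℕ) {x y : ℕ} (hy : y ∈ L) (h : x < y) :
    (L.filter fun z => z ≤ x).card < (L.filter fun z => z ≤ y).card := by
  apply Finset.card_lt_card
  constructor
  · intro z hz
    rw [Finset.mem_filter] at hz ⊢
    exact ⟨hz.1, le_trans hz.2 h.le⟩
  · intro hsub
    have h2 := hsub (Finset.mem_filter.2 ⟨hy, le_refl y⟩)
    exact absurd (Finset.mem_filter.1 h2).2 (not_le.2 h)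

lemma MP_rank_le_card (L : Finset ℕ) (x : ℕ) : (L.filter fun z => z ≤ x).card ≤ L.card :=
  Finset.card_le_card (Finset.filter_subset _ _)

lemma MP_one_le_rank (L : Finset ℕ) {x : ℕ} (hx : x ∈ L) : 1 ≤ (L.filter fun z => z ≤ x).card :=
  Finset.card_pos.2 ⟨x, Finset.mem_filter.2 ⟨hx, le_refl x⟩⟩

lemma MP_rank_left {a b : ℕ} (hab : a ≤ b) :
    ((Finset.Icc a b).filter fun z => z ≤ a).card = 1 := by
  have h : (Finset.Icc a b).filter (fun z => z ≤ a) = {a} := by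
    ext z
    simp only [Finset.mem_filter, Finset.mem_Icc, Finset.mem_singleton]
    omega
  rw [h, Finset.card_singleton]

lemma MP_rank_right {a b : ℕ} :
    ((Finset.Icc a b).filter fun z => z ≤ b).card = (Finset.Icc a b).card := by
  congr 1
  apply Finset.filter_true_of_mem
  intro z hz
  exact (Finset.mem_Icc.1 hz).2

lemma MP_rk_le_imp {L : Finset ℕ} {u v : ℕ} (hv : v ∈ L)
    (h : (L.filter fun y => y ≤ v).card ≤ (L.filter fun y => y ≤ u).card) : v ≤ u := by
  by_contra hc
  exact absurd h (not_le.2 (MP_rank_strict L hv (not_le.1 hc)))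

lemma MP_rk_lt_imp {L : Finset ℕ} {u v : ℕ}
    (h : (L.filter fun y => y ≤ v).card < (L.filter fun y => y ≤ u).card) : v < u := by
  by_contra hc
  exact absurd h (not_lt.2 (MP_rank_mono L (not_lt.1 hc)))


lemma MP_strictMono_le_apply {k N : ℕ} {f : Fin k → Fin N} (hf : StrictMono f) (i : Fin k) :
    i.val ≤ (f i).val := by
  obtain ⟨v, hv⟩ := i
  induction v with
  | zero => exact Nat.zero_le _
  | succ w ih =>
    have hw : w < k := Nat.lt_of_succ_lt hv
    have h1 : (f ⟨w, hw⟩).val < (f ⟨w + 1, hv⟩).val := hf (by simp [Fin.lt_def])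
    have h2 : w ≤ (f ⟨w, hw⟩).val := ih hw
    show w + 1 ≤ _
    omega

lemma MP_count_get (l : List ℕ) (a : ℕ) :
    (Finset.univ.filter fun i : Fin l.length => l.get i = a).card = l.count a := by
  have h1 : l.count a = ((List.finRange l.length).map l.get).count a := by
    rw [List.map_get_finRange]
  rw [h1, List.count_eq_countP, List.countP_map, List.countP_eq_length_filter]
  rw [← List.toFinset_card_of_nodup ((List.nodup_finRange _).filter _)]
  congr 1
  ext i
  simp [List.mem_filter, Function.comp]


lemma MP_take_succ_filter (l : List ℕ) (P : ℕ → Bool) (j : Fin l.length) :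
    (l.take (j.val + 1)).filter P =
      (l.take j.val).filter P ++ if P (l.get j) then [l.get j] else [] := by
  have h : l.take (j.val + 1) = l.take j.val ++ [l.get j] := by
    rw [← List.take_concat_get j.isLt]
    simp [List.concat_eq_append]
  rw [h, List.filter_append]
  congr 1
  by_cases hP : P (l.get j) <;> simp [List.get_eq_getElem] at hP ⊢ <;> simp [hP]

lemma MP_filter_index (l : List ℕ) (P : ℕ → Bool) (j : Fin l.length) (hj : P (l.get j) = true) :
    ∃ i : Fin (l.filter P).length,
      (l.filter P).get i = l.get j ∧ i.val = ((l.take j.val).filter P).length := by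
  have hsplit : l = l.take (j.val + 1) ++ l.drop (j.val + 1) := (List.take_append_drop _ _).symm
  have h1 : l.filter P = ((l.take j.val).filter P ++ [l.get j]) ++ (l.drop (j.val + 1)).filter P := by
    conv_lhs => rw [hsplit]
    rw [List.filter_append, MP_take_succ_filter l P j, hj]
    simp
  set A := (l.take j.val).filter P with hA
  have hlen : A.length < (l.filter P).length := by
    rw [h1]
    simp only [List.length_append, List.length_cons]
    omega
  refine ⟨⟨A.length, hlen⟩, ?_, rfl⟩
  rw [List.get_eq_getElem]
  rw [List.getElem_of_eq h1 hlen]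
  rw [List.getElem_append_left (by simp)]
  rw [List.getElem_append_right (by simp)]
  simp

lemma MP_filter_count_lt (l : List ℕ) (P : ℕ → Bool) (j j' : Fin l.length) (hjj : j < j')
    (hj : P (l.get j) = true) :
    ((l.take j.val).filter P).length < ((l.take j'.val).filter P).length := by
  have hjj' : (j : ℕ) < (j' : ℕ) := hjj
  have h1 : (l.take (j.val + 1)).filter P = (l.take j.val).filter P ++ [l.get j] := by
    rw [MP_take_succ_filter l P j, hj]
    simp
  have h2 : l.take j'.val = l.take (j.val + 1) ++ (l.take j'.val).drop (j.val + 1) := by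
    have hmin : min (j.val + 1) j'.val = j.val + 1 := by omega
    conv_lhs => rw [← List.take_append_drop (j.val + 1) (l.take j'.val)]
    rw [List.take_take, hmin]
  rw [h2, List.filter_append, h1]
  simp only [List.length_append, List.length_cons]
  omega


lemma MP_exists_inversion (ρ : List ℕ) (γ : ℕ)
    (h : ¬ ∃ ν ω : List ℕ, ρ = ν ++ ω ∧ (∀ x ∈ ν, x ≤ γ) ∧ (∀ x ∈ ω, γ < x)) :
    ∃ i j : Fin ρ.length, i < j ∧ γ < ρ.get i ∧ ρ.get j ≤ γ := by
  by_contra hc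
  push_neg at hc
  apply h
  set ν := ρ.takeWhile (fun x => decide (x ≤ γ)) with hν
  set ω := ρ.dropWhile (fun x => decide (x ≤ γ)) with hω
  have hρ : ρ = ν ++ ω := List.takeWhile_append_dropWhile.symm
  refine ⟨ν, ω, hρ, ?_, ?_⟩
  · intro x hx
    have := List.mem_takeWhile_imp hx
    simpa using this
  · intro x hx
    by_contra hxle
    push_neg at hxle
    have hωne : 0 < ω.length := List.length_pos_iff.2 (List.ne_nil_of_mem hx)
    have hhead : γ < ω.get ⟨0, hωne⟩ := by
      have h2 := List.dropWhile_get_zero_not (fun x => decide (x ≤ γ)) ρ (hω ▸ hωne)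
      have h3 : ¬ ω.get ⟨0, hωne⟩ ≤ γ := by simpa using h2
      exact not_le.1 h3
    obtain ⟨t, ht⟩ := List.mem_iff_get.1 hx
    have hνlen : ν.length < ρ.length := by
      rw [hρ, List.length_append]; omega
    have hjlen : ν.length + t.val < ρ.length := by
      rw [hρ, List.length_append]
      have := t.isLt
      omega
    have hgeti : ρ.get ⟨ν.length, hνlen⟩ = ω.get ⟨0, hωne⟩ := by
      rw [List.get_eq_getElem, List.get_eq_getElem]
      rw [List.getElem_of_eq hρ hνlen, List.getElem_append_right (le_refl _)]
      simp
    have hgetj : ρ.get ⟨ν.length + t.val, hjlen⟩ = x := by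
      rw [List.get_eq_getElem]
      rw [List.getElem_of_eq hρ hjlen, List.getElem_append_right (by omega)]
      simp only [Nat.add_sub_cancel_left]
      rw [← List.get_eq_getElem]
      exact ht
    have htpos : 0 < t.val := by
      rcases Nat.eq_zero_or_pos t.val with h0 | h0
      · exfalso
        have hte : ω.get ⟨0, hωne⟩ = x := by rw [← ht]; congr 1; apply Fin.ext; simp; omega
        omega
      · exact h0
    have hc' := hc ⟨ν.length, hνlen⟩ ⟨ν.length + t.val, hjlen⟩ (by simp [Fin.lt_def]; omega)
      (by rw [hgeti]; exact hhead)
    rw [hgetj] at hc'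
    omega

lemma MP_get_mid (μ ν ω : List ℕ) {i : ℕ} (hlen : i < (μ ++ ν ++ ω).length)
    (h1 : μ.length ≤ i) (h2 : i < μ.length + ν.length) : (μ ++ ν ++ ω)[i] ∈ ν := by
  rw [List.getElem_append_left (by simp; omega)]
  rw [List.getElem_append_right h1]
  exact List.getElem_mem _

lemma MP_get_last (μ ν ω : List ℕ) {i : ℕ} (hlen : i < (μ ++ ν ++ ω).length)
    (h : μ.length + ν.length ≤ i) : (μ ++ ν ++ ω)[i] ∈ ω := by
  rw [List.getElem_append_right (by simp; omega)]
  exact List.getElem_mem _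

theorem MP_part1 (k n : ℕ) (hk : 1 ≤ k) (hn : 1 ≤ n)
    (σ : List ℕ) (hσ : IsMultiPerm k n σ) (hfull : FullyKRootedCuttable k n σ) :
    ¬ ∃ (p : Fin k → Fin σ.length) (q r : Fin σ.length),
        StrictMono p ∧ (∀ m, p m < q) ∧ q < r ∧
        ∀ m, σ.get r ≤ σ.get (p m) ∧ σ.get (p m) ≤ σ.get q := by
  rintro ⟨p, q, r, hpmono, hpq, hqr, hval⟩
  have hbnds : ∀ j : Fin σ.length, 1 ≤ σ.get j ∧ σ.get j ≤ n := by
    intro j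
    have hmem : σ.get j ∈ σ := by rw [List.get_eq_getElem]; exact List.getElem_mem _
    have hcp : 0 < σ.count (σ.get j) := List.count_pos_iff.2 hmem
    by_contra hc
    rw [hσ (σ.get j), if_neg hc] at hcp
    exact lt_irrefl 0 hcp
  set a := σ.get r with haa
  set b := σ.get q with hbb
  have hab0 : a ≤ b := le_trans (hval ⟨0, hk⟩).1 (hval ⟨0, hk⟩).2
  have hne : a ≠ b := by
    intro he
    have hcount : σ.count a = k := by rw [hσ a, if_pos ⟨(hbnds r).1, (hbnds r).2⟩]
    classical
    set S : Finset (Fin σ.length) := insert r (insert q (Finset.image p Finset.univ)) with hS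
    have hqni : q ∉ Finset.image p Finset.univ := by
      intro hq
      obtain ⟨t, _, ht⟩ := Finset.mem_image.1 hq
      exact absurd (ht ▸ hpq t) (lt_irrefl q)
    have hrni : r ∉ insert q (Finset.image p Finset.univ) := by
      intro hr
      rcases Finset.mem_insert.1 hr with h | h
      · rw [h] at hqr
        exact lt_irrefl _ hqr
      · obtain ⟨t, _, ht⟩ := Finset.mem_image.1 h
        have h2 := hpq t
        rw [ht] at h2
        exact lt_irrefl r (lt_trans h2 hqr)
    have hcard : S.card = k + 2 := by
      rw [hS, Finset.card_insert_of_notMem hrni, Finset.card_insert_of_notMem hqni,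
        Finset.card_image_of_injective _ hpmono.injective, Finset.card_univ, Fintype.card_fin]
    have hsub : S ⊆ Finset.univ.filter (fun i => σ.get i = a) := by
      intro x hx
      rw [Finset.mem_filter]
      refine ⟨Finset.mem_univ _, ?_⟩
      rw [hS] at hx
      rcases Finset.mem_insert.1 hx with h | h
      · rw [h]
      · rcases Finset.mem_insert.1 h with h' | h'
        · rw [h']
          exact he.symm
        · obtain ⟨t, _, ht⟩ := Finset.mem_image.1 h'
          rw [← ht]
          have h1 := (hval t).1
          have h2 := (hval t).2
          omega
    have hle := Finset.card_le_card hsub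
    rw [hcard, MP_count_get σ a, hcount] at hle
    omega
  have hab : a < b := lt_of_le_of_ne hab0 hne
  obtain ⟨γ, hγ1, hγ2, μ, ν, ω, hsplit, hμlen, hν, hω⟩ :=
    hfull a b (hbnds r).1 hab (hbnds q).2
  set L := Finset.Icc a b with hL
  set m := L.card with hm
  have hm2 : 2 ≤ m := by
    rw [hm, hL, Nat.card_Icc]
    omega
  set P : ℕ → Bool := fun x => decide (x ∈ L) with hP
  set F := σ.filter P with hF
  set rk : ℕ → ℕ := fun x => (L.filter fun y => y ≤ x).card with hrk
  have hτF : restrict σ L = F.map rk := rfl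
  have hτlen : (restrict σ L).length = F.length := by
    rw [hτF, List.length_map]
  have hPp : ∀ t : Fin k, P (σ.get (p t)) = true := by
    intro t
    rw [hP]
    simp only [decide_eq_true_eq, hL, Finset.mem_Icc]
    exact ⟨(hval t).1, (hval t).2⟩
  have hPq : P (σ.get q) = true := by
    rw [hP]
    simp only [decide_eq_true_eq, hL, Finset.mem_Icc]
    exact ⟨hab0, le_refl _⟩
  have hPr : P (σ.get r) = true := by
    rw [hP]
    simp only [decide_eq_true_eq, hL, Finset.mem_Icc]
    exact ⟨le_refl _, hab0⟩
  obtain ⟨qx, hqx, hqxv⟩ := MP_filter_index σ P q hPq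
  obtain ⟨rx, hrx, hrxv⟩ := MP_filter_index σ P r hPr
  choose px hpx1 hpx2 using fun t => MP_filter_index σ P (p t) (hPp t)
  have hpxmono : StrictMono px := by
    intro s t hst
    rw [Fin.lt_def, hpx2 s, hpx2 t]
    exact MP_filter_count_lt σ P (p s) (p t) (hpmono hst) (hPp s)
  have hpxq : ∀ t, (px t).val < qx.val := by
    intro t
    rw [hpx2 t, hqxv]
    exact MP_filter_count_lt σ P (p t) q (hpq t) (hPp t)
  have hqxr : qx.val < rx.val := by
    rw [hqxv, hrxv]
    exact MP_filter_count_lt σ P q r hqr hPq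
  have hqxk : k ≤ qx.val := by
    have h1 := MP_strictMono_le_apply hpxmono ⟨k - 1, by omega⟩
    have h2 := hpxq ⟨k - 1, by omega⟩
    have h3 : (⟨k - 1, by omega⟩ : Fin k).val = k - 1 := rfl
    omega
  have hq2 : qx.val < (restrict σ L).length := by rw [hτlen]; exact qx.isLt
  have hr2 : rx.val < (restrict σ L).length := by rw [hτlen]; exact rx.isLt
  have hvq : (restrict σ L)[qx.val]'hq2 = m := by
    rw [List.getElem_of_eq hτF, List.getElem_map]
    have h1 : F[qx.val]'qx.isLt = b := by
      rw [← List.get_eq_getElem]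
      exact hqx
    rw [h1]
    exact MP_rank_right
  have hvr : (restrict σ L)[rx.val]'hr2 = 1 := by
    rw [List.getElem_of_eq hτF, List.getElem_map]
    have h1 : F[rx.val]'rx.isLt = a := by
      rw [← List.get_eq_getElem]
      exact hrx
    rw [h1]
    exact MP_rank_left hab.le
  have hsplen : qx.val < (μ ++ ν ++ ω).length := by rw [← hsplit]; exact hq2
  have hsplenr : rx.val < (μ ++ ν ++ ω).length := by rw [← hsplit]; exact hr2
  have hqν : k + ν.length ≤ qx.val := by
    by_contra hc
    push_neg at hc
    have hmem := MP_get_mid μ ν ω hsplen (by rw [hμlen]; exact hqxk) (by rw [hμlen]; omega)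
    have hle := hν _ hmem
    rw [← List.getElem_of_eq hsplit hq2, hvq] at hle
    omega
  have hmem := MP_get_last μ ν ω hsplenr (by rw [hμlen]; omega)
  have hgt := hω _ hmem
  rw [← List.getElem_of_eq hsplit hr2, hvr] at hgt
  omega

theorem MP_part2 (k n : ℕ) (hk : 1 ≤ k) (hn : 1 ≤ n)
    (σ : List ℕ) (hσ : IsMultiPerm k n σ) (hnf : ¬ FullyKRootedCuttable k n σ) :
      (∃ (p : Fin k → Fin σ.length) (q r : Fin σ.length),
          StrictMono p ∧ (∀ m, p m < q) ∧ q < r ∧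
          σ.get r < σ.get q ∧ ∀ m, σ.get (p m) ≤ σ.get q) ∧
      (∃ (p : Fin k → Fin σ.length) (q r : Fin σ.length),
          StrictMono p ∧ (∀ m, p m < q) ∧ q < r ∧
          σ.get r < σ.get q ∧ ∀ m, σ.get r ≤ σ.get (p m)) := by
  rw [FullyKRootedCuttable] at hnf
  push_neg at hnf
  obtain ⟨a, b, ha, hab, hb, hτ⟩ := hnf
  set L := Finset.Icc a b with hL
  set m := L.card with hm
  have hmcard : m = b + 1 - a := by rw [hm, hL, Nat.card_Icc]
  have hm2 : 2 ≤ m := by omega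
  set P : ℕ → Bool := fun x => decide (x ∈ L) with hP
  set F := σ.filter P with hF
  set rk : ℕ → ℕ := fun x => (L.filter fun y => y ≤ x).card with hrk
  have hτF : restrict σ L = F.map rk := rfl
  have hτlen : (restrict σ L).length = F.length := by rw [hτF, List.length_map]
  -- k ≤ F.length
  have hca : σ.count a = k := by rw [hσ a, if_pos ⟨ha, by omega⟩]
  have hkF : k ≤ F.length := by
    rw [hF, ← List.countP_eq_length_filter]
    calc k = σ.count a := hca.symm
      _ = σ.countP (· == a) := by rw [List.count_eq_countP]
      _ ≤ σ.countP P := by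
          apply List.countP_mono_left
          intro x hx hxa
          have : x = a := by simpa using hxa
          subst this
          rw [hP]
          simp [hL, Finset.mem_Icc]
          omega
  -- embedding
  obtain ⟨e, he⟩ := List.sublist_iff_exists_fin_orderEmbedding_get_eq.1
    (List.filter_sublist (l := σ) (p := P))
  have hFmem : ∀ i : Fin F.length, F.get i ∈ L := by
    intro i
    have h1 : F.get i ∈ σ.filter P := by
      rw [List.get_eq_getElem]
      exact List.getElem_mem _
    have h2 := List.of_mem_filter h1
    rw [List.get_eq_getElem]
    simpa [hP] using h2
  -- key inversion extraction
  have key : ∀ γ : ℕ, 1 ≤ γ → γ ≤ m - 1 →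
      ∃ i j : Fin F.length, k ≤ i.val ∧ i < j ∧ γ < rk (F.get i) ∧ rk (F.get j) ≤ γ := by
    intro γ hγ1 hγ2
    have hnc : ¬ IsKRootedCut k m (restrict σ L) γ := fun hcut => hτ ⟨γ, hcut⟩
    have hsplit : ¬ ∃ ν ω : List ℕ, (restrict σ L).drop k = ν ++ ω ∧
        (∀ x ∈ ν, x ≤ γ) ∧ (∀ x ∈ ω, γ < x) := by
      rintro ⟨ν, ω, hρ, hν, hω⟩
      apply hnc
      refine ⟨hγ1, hγ2, (restrict σ L).take k, ν, ω, ?_, ?_, hν, hω⟩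
      · rw [List.append_assoc, ← hρ, List.take_append_drop]
      · rw [List.length_take]
        omega
    obtain ⟨i, j, hij, hgi, hgj⟩ := MP_exists_inversion _ γ hsplit
    have hdl : ((restrict σ L).drop k).length = (restrict σ L).length - k :=
      List.length_drop
    have hilen : k + i.val < F.length := by
      have h1 := i.isLt
      omega
    have hjlen : k + j.val < F.length := by
      have h1 := j.isLt
      omega
    have hgeti : ((restrict σ L).drop k).get i = rk (F.get ⟨k + i.val, hilen⟩) := by
      rw [List.get_eq_getElem, List.getElem_drop]
      rw [List.getElem_of_eq hτF, List.getElem_map]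
      rfl
    have hgetj : ((restrict σ L).drop k).get j = rk (F.get ⟨k + j.val, hjlen⟩) := by
      rw [List.get_eq_getElem, List.getElem_drop]
      rw [List.getElem_of_eq hτF, List.getElem_map]
      rfl
    have hijv : i.val < j.val := hij
    refine ⟨⟨k + i.val, hilen⟩, ⟨k + j.val, hjlen⟩, Nat.le_add_right _ _, Fin.mk_lt_mk.2 (by omega), ?_, ?_⟩
    · rw [← hgeti]; exact hgi
    · rw [← hgetj]; exact hgj
  constructor
  · -- pattern A : γ = m - 1
    obtain ⟨i, j, hki, hij, hgi, hgj⟩ := key (m - 1) (by omega) (le_refl _)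
    have hklt : ∀ t : Fin k, (t : ℕ) < F.length := fun t => lt_of_lt_of_le t.isLt (le_trans hki (le_of_lt i.isLt))
    refine ⟨fun t => e ⟨t.val, hklt t⟩, e i, e j, ?_, ?_, ?_, ?_, ?_⟩
    · intro s t hst
      exact e.strictMono (Fin.mk_lt_mk.2 hst)
    · intro t
      exact e.strictMono (Fin.mk_lt_mk.2 (lt_of_lt_of_le t.isLt hki))
    · exact e.strictMono hij
    · have h1 : rk (F.get j) < rk (F.get i) := by omega
      have h2 : F.get j < F.get i := MP_rk_lt_imp (L := L) h1
      rw [he i, he j] at h2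
      exact h2
    · intro t
      have h1 : rk (F.get ⟨t.val, hklt t⟩) ≤ rk (F.get i) := by
        have h3 : rk (F.get ⟨t.val, hklt t⟩) ≤ m := MP_rank_le_card L _
        omega
      have h2 : F.get ⟨t.val, hklt t⟩ ≤ F.get i := MP_rk_le_imp (hFmem _) h1
      rw [he i, he ⟨t.val, hklt t⟩] at h2
      exact h2
  · -- pattern B : γ = 1
    obtain ⟨i, j, hki, hij, hgi, hgj⟩ := key 1 (le_refl _) (by omega)
    have hklt : ∀ t : Fin k, (t : ℕ) < F.length := fun t => lt_of_lt_of_le t.isLt (le_trans hki (le_of_lt i.isLt))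
    refine ⟨fun t => e ⟨t.val, hklt t⟩, e i, e j, ?_, ?_, ?_, ?_, ?_⟩
    · intro s t hst
      exact e.strictMono (Fin.mk_lt_mk.2 hst)
    · intro t
      exact e.strictMono (Fin.mk_lt_mk.2 (lt_of_lt_of_le t.isLt hki))
    · exact e.strictMono hij
    · have h1 : rk (F.get j) < rk (F.get i) := by omega
      have h2 : F.get j < F.get i := MP_rk_lt_imp (L := L) h1
      rw [he i, he j] at h2
      exact h2
    · intro t
      have h1 : rk (F.get j) ≤ rk (F.get ⟨t.val, hklt t⟩) := by
        have h3 : 1 ≤ rk (F.get ⟨t.val, hklt t⟩) := MP_one_le_rank L (hFmem ⟨t.val, hklt t⟩)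
        omega
      have h2 : F.get j ≤ F.get ⟨t.val, hklt t⟩ := MP_rk_le_imp (hFmem _) h1
      rw [he j, he ⟨t.val, hklt t⟩] at h2
      exact h2

theorem fullyKRootedCuttable_patterns (k n : ℕ) (hk : 1 ≤ k) (hn : 1 ≤ n)
    (σ : List ℕ) (hσ : IsMultiPerm k n σ) :
    (FullyKRootedCuttable k n σ →
      ¬ ∃ (p : Fin k → Fin σ.length) (q r : Fin σ.length),
          StrictMono p ∧ (∀ m, p m < q) ∧ q < r ∧
          ∀ m, σ.get r ≤ σ.get (p m) ∧ σ.get (p m) ≤ σ.get q) ∧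
    (¬ FullyKRootedCuttable k n σ →
      (∃ (p : Fin k → Fin σ.length) (q r : Fin σ.length),
          StrictMono p ∧ (∀ m, p m < q) ∧ q < r ∧
          σ.get r < σ.get q ∧ ∀ m, σ.get (p m) ≤ σ.get q) ∧
      (∃ (p : Fin k → Fin σ.length) (q r : Fin σ.length),
          StrictMono p ∧ (∀ m, p m < q) ∧ q < r ∧
          σ.get r < σ.get q ∧ ∀ m, σ.get r ≤ σ.get (p m))) := by
  constructor
  · intro hfull
    exact MP_part1 k n hk hn σ hσ hfull
  · intro hnf
    exact MP_part2 k n hk hn σ hσ hnf
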